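/- If K is a linearly ordered field and G is a linearly ordered group, then the group algebra K[G] can be given a linear order making it a linearly ordered ring: writing elements as finite sums of coefficients times group elements with group elements in decreasing order, compare lexicographically by coefficients. In particular, K[G] admits a compatible linear order on its additive group such that products of positive elements with positive elements preserve order. -/

import Mathlib

open Finsupp

section aux

variable {K G : Type*} [Field K] [LinearOrder K] [IsStrictOrderedRing K] [Group G] [LinearOrder G]

/-- The leading coefficient: the value at the maximal element of the support. -/
noncomputable def GAlead (f : MonoidAlgebra K G) : K :=
  if h : f.coeff.support.Nonempty then f.coeff (f.coeff.support.max' h) else 0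

lemma GAlead_zero : GAlead (0 : MonoidAlgebra K G) = 0 := by
  rw [GAlead, dif_neg]
  simp

lemma GAlead_eq {f : MonoidAlgebra K G} (h : f.coeff.support.Nonempty) :
    GAlead f = f.coeff (f.coeff.support.max' h) := by
  rw [GAlead, dif_pos h]

lemma GAlead_ne_zero {f : MonoidAlgebra K G} (hf : f ≠ 0) : GAlead f ≠ 0 := by
  have h : f.coeff.support.Nonempty := Finsupp.support_nonempty_iff.mpr (mt MonoidAlgebra.coeff_eq_zero.mp hf)
  rw [GAlead_eq h]
  exact Finsupp.mem_support_iff.mp (f.coeff.support.max'_mem h)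

lemma GA_ne_zero {f : MonoidAlgebra K G} (hf : 0 < GAlead f) : f ≠ 0 := by
  intro h
  rw [h, GAlead_zero] at hf
  exact lt_irrefl 0 hf

lemma GAlead_neg (f : MonoidAlgebra K G) : GAlead (-f) = - GAlead f := by
  have e : (-f).coeff.support = f.coeff.support := Finsupp.support_neg f.coeff
  by_cases h : f.coeff.support.Nonempty
  · have h' : (-f).coeff.support.Nonempty := by rw [e]; exact h
    rw [GAlead_eq h, GAlead_eq h']
    have hmax : (-f).coeff.support.max' h' = f.coeff.support.max' h := by
      apply le_antisymm
      · exact Finset.max'_le _ _ _ (fun g hg => Finset.le_max' _ g (by rwa [← e]))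
      · exact Finset.le_max' _ _ (by rw [e]; exact f.coeff.support.max'_mem h)
    rw [hmax, MonoidAlgebra.coeff_neg, Finsupp.neg_apply]
  · rw [GAlead, GAlead, dif_neg h, dif_neg (by rwa [e]), neg_zero]

lemma GAlead_pos_of {f : MonoidAlgebra K G} {m : G} (h0 : 0 < f.coeff m)
    (hmax : ∀ g ∈ f.coeff.support, g ≤ m) : 0 < GAlead f := by
  have hm : m ∈ f.coeff.support := Finsupp.mem_support_iff.mpr h0.ne'
  have h : f.coeff.support.Nonempty := ⟨m, hm⟩
  have hme : f.coeff.support.max' h = m :=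
    le_antisymm (Finset.max'_le _ _ _ hmax) (Finset.le_max' _ _ hm)
  rw [GAlead_eq h, hme]
  exact h0

lemma GApos_add {a b : MonoidAlgebra K G} (ha : 0 < GAlead a) (hb : 0 < GAlead b) :
    0 < GAlead (a + b) := by
  have hna : a.coeff.support.Nonempty := Finsupp.support_nonempty_iff.mpr (mt MonoidAlgebra.coeff_eq_zero.mp <| GA_ne_zero ha)
  have hnb : b.coeff.support.Nonempty := Finsupp.support_nonempty_iff.mpr (mt MonoidAlgebra.coeff_eq_zero.mp <| GA_ne_zero hb)
  set ma := a.coeff.support.max' hna with hma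
  set mb := b.coeff.support.max' hnb with hmb
  have ha' : 0 < a.coeff ma := by rw [← GAlead_eq hna]; exact ha
  have hb' : 0 < b.coeff mb := by rw [← GAlead_eq hnb]; exact hb
  set m := max ma mb with hm
  have hann : 0 ≤ a.coeff m := by
    rcases eq_or_ne m ma with h | h
    · rw [h]; exact ha'.le
    · have : m ∉ a.coeff.support := by
        intro hmem
        exact h.symm (le_antisymm (le_max_left _ _) (Finset.le_max' _ _ hmem))
      rw [Finsupp.notMem_support_iff.mp this]
  have hbnn : 0 ≤ b.coeff m := by
    rcases eq_or_ne m mb with h | h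
    · rw [h]; exact hb'.le
    · have : m ∉ b.coeff.support := by
        intro hmem
        exact h.symm (le_antisymm (le_max_right _ _) (Finset.le_max' _ _ hmem))
      rw [Finsupp.notMem_support_iff.mp this]
  have hpos : 0 < (a + b).coeff m := by
    rw [MonoidAlgebra.coeff_add, Finsupp.add_apply]
    rcases max_cases ma mb with ⟨h1, _⟩ | ⟨h1, _⟩
    · exact add_pos_of_pos_of_nonneg (by rw [hm, h1]; exact ha') hbnn
    · exact add_pos_of_nonneg_of_pos hann (by rw [hm, h1]; exact hb')
  apply GAlead_pos_of hpos
  intro g hg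
  have := Finsupp.support_add hg
  rcases Finset.mem_union.mp this with h | h
  · exact le_trans (Finset.le_max' _ _ h) (le_max_left _ _)
  · exact le_trans (Finset.le_max' _ _ h) (le_max_right _ _)

lemma GApos_mul (hG : ∀ a b x y : G, x < y → a * x * b < a * y * b)
    {a b : MonoidAlgebra K G} (ha : 0 < GAlead a) (hb : 0 < GAlead b) :
    0 < GAlead (a * b) := by
  classical
  have hl : ∀ c x y : G, x < y → c * x < c * y := fun c x y h => by
    simpa using hG c 1 x y h
  have hr : ∀ c x y : G, x < y → x * c < y * c := fun c x y h => by
    simpa using hG 1 c x y h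
  have hl' : ∀ c x y : G, x ≤ y → c * x ≤ c * y := fun c x y h => by
    rcases h.lt_or_eq with h | h
    · exact (hl c x y h).le
    · rw [h]
  have hr' : ∀ c x y : G, x ≤ y → x * c ≤ y * c := fun c x y h => by
    rcases h.lt_or_eq with h | h
    · exact (hr c x y h).le
    · rw [h]
  have hna : a.coeff.support.Nonempty := Finsupp.support_nonempty_iff.mpr (mt MonoidAlgebra.coeff_eq_zero.mp <| GA_ne_zero ha)
  have hnb : b.coeff.support.Nonempty := Finsupp.support_nonempty_iff.mpr (mt MonoidAlgebra.coeff_eq_zero.mp <| GA_ne_zero hb)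
  set ma := a.coeff.support.max' hna with hma
  set mb := b.coeff.support.max' hnb with hmb
  have ha' : 0 < a.coeff ma := by rw [← GAlead_eq hna]; exact ha
  have hb' : 0 < b.coeff mb := by rw [← GAlead_eq hnb]; exact hb
  have hbound : ∀ x ∈ a.coeff.support, ∀ y ∈ b.coeff.support, x * y ≤ ma * mb := by
    intro x hx y hy
    exact le_trans (hr' y x ma (Finset.le_max' _ _ hx))
      (hl' ma y mb (Finset.le_max' _ _ hy))
  have key : (a * b).coeff (ma * mb) = a.coeff ma * b.coeff mb := by
    rw [MonoidAlgebra.mul_apply, Finsupp.sum]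
    rw [Finset.sum_eq_single ma]
    · rw [Finsupp.sum, Finset.sum_eq_single mb]
      · rw [if_pos rfl]
      · intro y hy hne
        rw [if_neg]
        intro hxy
        have hylt : y < mb := lt_of_le_of_ne (Finset.le_max' _ _ hy) hne
        exact (hl ma y mb hylt).ne hxy
      · intro h; exact absurd (b.coeff.support.max'_mem hnb) h
    · intro x hx hne
      rw [Finsupp.sum]
      apply Finset.sum_eq_zero
      intro y hy
      rw [if_neg]
      intro hxy
      have hxlt : x < ma := lt_of_le_of_ne (Finset.le_max' _ _ hx) hne
      have : x * y < ma * mb :=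
        lt_of_lt_of_le (hr y x ma hxlt) (hl' ma y mb (Finset.le_max' _ _ hy))
      exact this.ne hxy
    · intro h; exact absurd (a.coeff.support.max'_mem hna) h
  have hpos : 0 < (a * b).coeff (ma * mb) := by rw [key]; exact mul_pos ha' hb'
  apply GAlead_pos_of hpos
  intro g hg
  by_contra hgt
  push_neg at hgt
  have : (a * b).coeff g = 0 := by
    rw [MonoidAlgebra.mul_apply, Finsupp.sum]
    apply Finset.sum_eq_zero
    intro x hx
    rw [Finsupp.sum]
    apply Finset.sum_eq_zero
    intro y hy
    rw [if_neg]
    intro hxy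
    exact absurd (hxy ▸ hbound x hx y hy) (not_le_of_gt hgt)
  exact Finsupp.mem_support_iff.mp hg this

end aux

theorem group_algebra_orderable (K G : Type*) [Field K] [LinearOrder K] [IsStrictOrderedRing K] [Group G]
    [LinearOrder G] (hG : ∀ a b x y : G, x < y → a * x * b < a * y * b) :
    ∃ lo : LinearOrder (MonoidAlgebra K G),
      (∀ x y z : MonoidAlgebra K G, lo.lt x y → lo.lt (x + z) (y + z)) ∧
      (∀ a x y : MonoidAlgebra K G, lo.lt 0 a → lo.lt x y →
        lo.lt (a * x) (a * y) ∧ lo.lt (x * a) (y * a)) := by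
  classical
  let lt : MonoidAlgebra K G → MonoidAlgebra K G → Prop :=
    fun x y => 0 < GAlead (y - x)
  have asym : ∀ x y, lt x y → lt y x → False := by
    intro x y h1 h2
    have := GApos_add h1 h2
    rw [show (y - x) + (x - y) = 0 by abel, GAlead_zero] at this
    exact lt_irrefl 0 this
  have notltself : ∀ x, ¬ lt x x := fun x h => asym x x h h
  let lo : LinearOrder (MonoidAlgebra K G) :=
  { lt := lt
    le := fun x y => lt x y ∨ x = y
    le_refl := fun x => Or.inr rfl
    le_trans := by
      rintro x y z (h1 | rfl) (h2 | rfl)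
      · left
        have := GApos_add h2 h1
        rwa [show (z - y) + (y - x) = z - x by abel] at this
      · exact Or.inl h1
      · exact Or.inl h2
      · exact Or.inr rfl
    lt_iff_le_not_ge := by
      intro x y
      constructor
      · intro h
        refine ⟨Or.inl h, ?_⟩
        rintro (h' | rfl)
        · exact asym x y h h'
        · exact notltself _ h
      · rintro ⟨h1 | rfl, h2⟩
        · exact h1
        · exact absurd (Or.inr rfl) h2
    le_antisymm := by
      rintro x y (h1 | rfl) (h2 | h2)
      · exact absurd h2 (fun h => asym x y h1 h)
      · exact h2.symm
      · rfl
      · rfl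
    le_total := by
      intro x y
      rcases eq_or_ne x y with rfl | hne
      · exact Or.inl (Or.inr rfl)
      · have hsub : y - x ≠ 0 := sub_ne_zero.mpr (Ne.symm hne)
        rcases (GAlead_ne_zero hsub).lt_or_gt with h | h
        · refine Or.inr (Or.inl ?_)
          show 0 < GAlead (x - y)
          rw [show x - y = -(y - x) by abel, GAlead_neg]
          exact neg_pos.mpr h
        · exact Or.inl (Or.inl h)
    toDecidableLE := Classical.decRel _ }
  refine ⟨lo, ?_, ?_⟩
  · intro x y z h
    show 0 < GAlead (y + z - (x + z))
    rw [show y + z - (x + z) = y - x by abel]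
    exact h
  · intro a x y h0 hxy
    have ha : 0 < GAlead a := by
      have h : 0 < GAlead (a - 0) := h0
      rwa [sub_zero] at h
    have hyx : 0 < GAlead (y - x) := hxy
    constructor
    · show 0 < GAlead (a * y - a * x)
      rw [show a * y - a * x = a * (y - x) from (mul_sub a y x).symm]
      exact GApos_mul hG ha hyx
    · show 0 < GAlead (y * a - x * a)
      rw [show y * a - x * a = (y - x) * a from (sub_mul y x a).symm]
      exact GApos_mul hG hyx ha
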